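/- The sequence T_n = (1/n²) · Σ_{j|n} φ(j)² · j^{n/j} · (n/j)! satisfies T_n / (n-2)! → 1 as n → ∞. -/

import Mathlib

open Filter Finset

/-- `T_n = (1/n²) ∑_{j|n} φ(j)² j^{n/j} (n/j)!`, as a real number. -/
noncomputable def T (n : ℕ) : ℝ :=
  (1 / (n : ℝ) ^ 2) *
    ∑ j ∈ n.divisors, ((Nat.totient j : ℝ)) ^ 2 * (j : ℝ) ^ (n / j) * ((n / j).factorial : ℝ)

/-- The "small" part of the sum. -/
def Ser (n : ℕ) : ℕ :=
  ∑ j ∈ n.divisors.erase 1, Nat.totient j ^ 2 * j ^ (n / j) * (n / j).factorial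

lemma snat_eq (n : ℕ) (hn : 1 ≤ n) :
    (∑ j ∈ n.divisors, Nat.totient j ^ 2 * j ^ (n / j) * (n / j).factorial)
      = n.factorial + Ser n := by
  rw [← Finset.add_sum_erase _ _ (Nat.one_mem_divisors.2 (by omega))]
  simp [Ser]

lemma serase_le (n : ℕ) (hn : 1 ≤ n) : Ser n ≤ n ^ (n / 2 + 3) := by
  have hterm : ∀ j ∈ n.divisors.erase 1,
      Nat.totient j ^ 2 * j ^ (n / j) * (n / j).factorial ≤ n ^ (n / 2 + 2) := by
    intro j hj
    have hj1 : j ≠ 1 := Finset.ne_of_mem_erase hj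
    have hjd : j ∈ n.divisors := Finset.mem_of_mem_erase hj
    have hdvd : j ∣ n := Nat.dvd_of_mem_divisors hjd
    have hjpos : 0 < j := Nat.pos_of_mem_divisors hjd
    have hj2 : 2 ≤ j := by omega
    have hjn : j ≤ n := Nat.le_of_dvd (by omega) hdvd
    set m := n / j with hm
    have hjm : j * m = n := Nat.mul_div_cancel' hdvd
    have h1 : Nat.totient j ^ 2 ≤ n ^ 2 :=
      Nat.pow_le_pow_left ((Nat.totient_le j).trans hjn) 2
    have h2 : j ^ m * m.factorial ≤ n ^ (n / 2) := by
      calc j ^ m * m.factorial ≤ j ^ m * m ^ m :=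
            Nat.mul_le_mul_left _ (Nat.factorial_le_pow m)
        _ = (j * m) ^ m := (mul_pow j m m).symm
        _ = n ^ m := by rw [hjm]
        _ ≤ n ^ (n / 2) := Nat.pow_le_pow_right (by omega)
              (Nat.div_le_div_left hj2 (by omega))
    calc Nat.totient j ^ 2 * j ^ m * m.factorial
        = Nat.totient j ^ 2 * (j ^ m * m.factorial) := by ring
      _ ≤ n ^ 2 * n ^ (n / 2) := Nat.mul_le_mul h1 h2
      _ = n ^ (n / 2 + 2) := by rw [← pow_add]; ring_nf
  calc Ser n ≤ (n.divisors.erase 1).card • n ^ (n / 2 + 2) :=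
        Finset.sum_le_card_nsmul _ _ _ hterm
    _ = (n.divisors.erase 1).card * n ^ (n / 2 + 2) := by rw [smul_eq_mul]
    _ ≤ n * n ^ (n / 2 + 2) := by
        refine Nat.mul_le_mul_right _ ?_
        have hsub : n.divisors.erase 1 ⊆ Finset.Icc 2 n := by
          intro j hj
          have hj1 : j ≠ 1 := Finset.ne_of_mem_erase hj
          have hjd : j ∈ n.divisors := Finset.mem_of_mem_erase hj
          have := Nat.pos_of_mem_divisors hjd
          have := Nat.le_of_dvd (by omega) (Nat.dvd_of_mem_divisors hjd)
          exact Finset.mem_Icc.2 ⟨by omega, by omega⟩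
        calc (n.divisors.erase 1).card ≤ (Finset.Icc 2 n).card :=
              Finset.card_le_card hsub
          _ = n + 1 - 2 := Nat.card_Icc 2 n
          _ ≤ n := by omega
    _ = n ^ (n / 2 + 3) := by rw [← pow_succ']

lemma key (n : ℕ) (hn : 4 ≤ n) :
    n ^ (n / 2 + 1) * (n / 2).factorial ≤ 3 * 24 ^ (n / 2) * (n - 2).factorial := by
  set k := n / 2 with hk
  have hk2 : 2 ≤ k := by omega
  have h1 : n ≤ 3 * k := by omega
  have h3 : k - 2 ≤ n - 2 - k := by omega
  have hcube : k ^ 3 ≤ 8 ^ k := by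
    calc k ^ 3 ≤ (2 ^ k) ^ 3 := Nat.pow_le_pow_left (Nat.lt_two_pow_self (n := k)).le 3
      _ = 8 ^ k := by rw [← pow_mul, mul_comm k 3, pow_mul]; norm_num
  have hA : n ^ (k + 1) ≤ 3 * 24 ^ k * k ^ (k - 2) := by
    calc n ^ (k + 1) ≤ (3 * k) ^ (k + 1) := Nat.pow_le_pow_left h1 _
      _ = 3 ^ (k + 1) * k ^ (k + 1) := mul_pow 3 k (k + 1)
      _ = 3 * 3 ^ k * (k ^ 3 * k ^ (k - 2)) := by
          rw [← pow_add]
          have : 3 + (k - 2) = k + 1 := by omega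
          rw [this, pow_succ]
          ring
      _ ≤ 3 * 3 ^ k * (8 ^ k * k ^ (k - 2)) :=
          Nat.mul_le_mul_left _ (Nat.mul_le_mul_right _ hcube)
      _ = 3 * 24 ^ k * k ^ (k - 2) := by
          rw [show (24 : ℕ) = 3 * 8 by norm_num, mul_pow]
          ring
  have hB : k.factorial * k ^ (k - 2) ≤ (n - 2).factorial := by
    calc k.factorial * k ^ (k - 2) ≤ k.factorial * (k + 1) ^ (n - 2 - k) := by
          refine Nat.mul_le_mul_left _ ?_
          calc k ^ (k - 2) ≤ (k + 1) ^ (k - 2) := Nat.pow_le_pow_left (by omega) _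
            _ ≤ (k + 1) ^ (n - 2 - k) := Nat.pow_le_pow_right (by omega) h3
      _ ≤ (k + (n - 2 - k)).factorial := Nat.factorial_mul_pow_le_factorial
      _ = (n - 2).factorial := by congr 1; omega
  calc n ^ (k + 1) * k.factorial ≤ 3 * 24 ^ k * k ^ (k - 2) * k.factorial :=
        Nat.mul_le_mul_right _ hA
    _ = 3 * 24 ^ k * (k.factorial * k ^ (k - 2)) := by ring
    _ ≤ 3 * 24 ^ k * (n - 2).factorial := Nat.mul_le_mul_left _ hB

theorem stmt_14 :
    Tendsto (fun n : ℕ => T n / ((n - 2).factorial : ℝ)) atTop (nhds 1) := by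
  have hmain : Tendsto (fun n : ℕ => 1 - 1 / (n : ℝ)) atTop (nhds 1) := by
    simpa using tendsto_const_nhds.sub (tendsto_one_div_atTop_nhds_zero_nat (𝕜 := ℝ))
  have hb : Tendsto (fun n : ℕ => 3 * ((24 : ℝ) ^ (n / 2) / ((n / 2).factorial : ℝ)))
      atTop (nhds 0) := by
    have h2 : Tendsto (fun n : ℕ => n / 2) atTop atTop :=
      Filter.tendsto_atTop_atTop.2 fun b => ⟨2 * b, fun a ha => by omega⟩
    have := (FloorSemiring.tendsto_pow_div_factorial_atTop (24 : ℝ)).comp h2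
    simpa using tendsto_const_nhds.mul this
  have hrem : Tendsto (fun n : ℕ => (Ser n : ℝ) / ((n : ℝ) ^ 2 * ((n - 2).factorial : ℝ)))
      atTop (nhds 0) := by
    apply squeeze_zero' (Eventually.of_forall fun n => by positivity)
      ?_ hb
    filter_upwards [eventually_ge_atTop 4] with n hn
    set k := n / 2 with hk
    have hnpos : (0 : ℝ) < (n : ℝ) := by positivity
    have hfac2 : (0 : ℝ) < ((n - 2).factorial : ℝ) := by positivity
    have hfack : (0 : ℝ) < (k.factorial : ℝ) := by positivity
    have step1 : (Ser n : ℝ) / ((n : ℝ) ^ 2 * ((n - 2).factorial : ℝ))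
        ≤ (n : ℝ) ^ (k + 1) / ((n - 2).factorial : ℝ) := by
      rw [div_le_div_iff₀ (by positivity) hfac2]
      have h := serase_le n (by omega)
      have : (Ser n : ℝ) ≤ (n : ℝ) ^ (k + 3) := by exact_mod_cast h
      calc (Ser n : ℝ) * ((n - 2).factorial : ℝ)
          ≤ (n : ℝ) ^ (k + 3) * ((n - 2).factorial : ℝ) := by
            exact mul_le_mul_of_nonneg_right this hfac2.le
        _ = (n : ℝ) ^ (k + 1) * ((n : ℝ) ^ 2 * ((n - 2).factorial : ℝ)) := by ring
    have step2 : (n : ℝ) ^ (k + 1) / ((n - 2).factorial : ℝ)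
        ≤ 3 * ((24 : ℝ) ^ k / (k.factorial : ℝ)) := by
      have h : (n : ℝ) ^ (k + 1) / ((n - 2).factorial : ℝ)
          ≤ (3 * 24 ^ k : ℝ) / (k.factorial : ℝ) := by
        rw [div_le_div_iff₀ hfac2 hfack]
        exact_mod_cast key n hn
      calc (n : ℝ) ^ (k + 1) / ((n - 2).factorial : ℝ)
          ≤ (3 * 24 ^ k : ℝ) / (k.factorial : ℝ) := h
        _ = 3 * ((24 : ℝ) ^ k / (k.factorial : ℝ)) := by ring
    exact step1.trans step2
  have heq : (fun n : ℕ => T n / ((n - 2).factorial : ℝ)) =ᶠ[atTop]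
      fun n : ℕ => (1 - 1 / (n : ℝ)) +
        (Ser n : ℝ) / ((n : ℝ) ^ 2 * ((n - 2).factorial : ℝ)) := by
    filter_upwards [eventually_ge_atTop 2] with n hn
    have hnpos : (0 : ℝ) < (n : ℝ) := by exact_mod_cast (by omega : 0 < n)
    have hfac2 : (0 : ℝ) < ((n - 2).factorial : ℝ) := by positivity
    have hsum : (∑ j ∈ n.divisors, ((Nat.totient j : ℝ)) ^ 2 * (j : ℝ) ^ (n / j)
        * ((n / j).factorial : ℝ)) = ((n.factorial + Ser n : ℕ) : ℝ) := by
      rw [← snat_eq n (by omega)]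
      push_cast
      rfl
    have hfac : (n.factorial : ℝ) = (n : ℝ) * ((n : ℝ) - 1) * ((n - 2).factorial : ℝ) := by
      obtain ⟨m, rfl⟩ : ∃ m, n = m + 2 := ⟨n - 2, by omega⟩
      simp [Nat.factorial_succ]
      push_cast
      ring
    rw [T, hsum]
    push_cast
    rw [hfac]
    field_simp
  rw [show (1 : ℝ) = 1 + 0 by ring]
  exact (hmain.add hrem).congr' heq.symm
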